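/- Let m > 1 be an integer. The map h/k ↦ (2h−k)/h is an order-preserving bijection from F^{≥1/2}(B(2m),m) onto the Farey sequence F_m, and the map h/k ↦ k/(2k−h) is its inverse, an order-preserving bijection from F_m onto F^{≥1/2}(B(2m),m). (Here h/k denotes a fraction in lowest terms.) -/

import Mathlib

/-- The Farey sequence `F_n` of order `n`, viewed as the set of rationals `q`
with `0 ≤ q ≤ 1` whose lowest-terms denominator is at most `n`. -/
def Farey (n : ℕ) : Set ℚ :=
  {q : ℚ | 0 ≤ q ∧ q ≤ 1 ∧ q.den ≤ n}

/-- The Farey subsequence `F(B(n),m)`: fractions `h/k ∈ F_n` in lowest terms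
with `h ≤ m` and `k - h ≤ n - m`. -/
def FareyB (n m : ℕ) : Set ℚ :=
  {q : ℚ | 0 ≤ q ∧ q ≤ 1 ∧ q.den ≤ n ∧ q.num ≤ (m : ℤ) ∧
    (q.den : ℤ) - q.num ≤ (n : ℤ) - (m : ℤ)}

/-- `f'` is the predecessor of `f` in the set `S` of rationals. -/
def IsPredIn (S : Set ℚ) (f' f : ℚ) : Prop :=
  f' ∈ S ∧ f ∈ S ∧ f' < f ∧ ∀ g ∈ S, ¬(f' < g ∧ g < f)

/-- `f'` is the successor of `f` in the set `S` of rationals. -/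
def IsSuccIn (S : Set ℚ) (f f' : ℚ) : Prop :=
  f ∈ S ∧ f' ∈ S ∧ f < f' ∧ ∀ g ∈ S, ¬(f < g ∧ g < f')

/-- The right halfsequence `F^{≥1/2}(B(2m),m)`. -/
def FareyBRight (m : ℕ) : Set ℚ := {q ∈ FareyB (2 * m) m | 1 / 2 ≤ q}

/-- On a fraction `q = h/k` in lowest terms, the map `h/k ↦ (2h-k)/h`. -/
def phi (q : ℚ) : ℚ := (2 * (q.num : ℚ) - (q.den : ℚ)) / (q.num : ℚ)

/-- On a fraction `q = h/k` in lowest terms, the map `h/k ↦ k/(2k-h)`. -/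
def psi (q : ℚ) : ℚ := (q.den : ℚ) / (2 * (q.den : ℚ) - (q.num : ℚ))


lemma rat_copr (q : ℚ) : IsCoprime q.num (q.den : ℤ) := by
  rw [Int.isCoprime_iff_gcd_eq_one]
  exact q.reduced

lemma num_den_of (a b : ℤ) (hb : 0 < b) (hc : IsCoprime a b) :
    ((a : ℚ) / b).num = a ∧ (((a : ℚ) / b).den : ℤ) = b := by
  have h : Nat.Coprime a.natAbs b.natAbs := by
    rw [Nat.coprime_iff_gcd_eq_one]
    exact Int.isCoprime_iff_gcd_eq_one.mp hc
  exact ⟨Rat.num_div_eq_of_coprime hb h, Rat.den_div_eq_of_coprime hb h⟩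

lemma phi_num_den (q : ℚ) (h2 : (q.den : ℤ) ≤ 2 * q.num) :
    (phi q).num = 2 * q.num - q.den ∧ ((phi q).den : ℤ) = q.num := by
  have hd : (0:ℤ) < q.den := mod_cast q.pos
  have hn : 0 < q.num := by omega
  have hc : IsCoprime (2 * q.num - q.den) q.num := by
    have := (rat_copr q).symm.neg_left
    have h' : IsCoprime (-(q.den:ℤ) + q.num * 2) q.num := this.add_mul_left_left 2
    have e : 2 * q.num - (q.den:ℤ) = -(q.den:ℤ) + q.num * 2 := by ring
    rw [e]; exact h'
  have := num_den_of (2 * q.num - q.den) q.num hn hc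
  have e : phi q = ((2 * q.num - q.den : ℤ) : ℚ) / ((q.num : ℤ) : ℚ) := by
    unfold phi; push_cast; ring_nf
  rw [e]; exact this

lemma psi_num_den (q : ℚ) (h1 : q.num ≤ q.den) :
    (psi q).num = q.den ∧ ((psi q).den : ℤ) = 2 * q.den - q.num := by
  have hd : (0:ℤ) < q.den := mod_cast q.pos
  have hb : (0:ℤ) < 2 * q.den - q.num := by omega
  have hc : IsCoprime (q.den : ℤ) (2 * q.den - q.num) := by
    have := (rat_copr q).neg_left.symm
    have h' : IsCoprime (q.den : ℤ) (-q.num + q.den * 2) := this.add_mul_left_right 2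
    have e : 2 * (q.den:ℤ) - q.num = -q.num + q.den * 2 := by ring
    rw [e]; exact h'
  have := num_den_of q.den (2 * q.den - q.num) hb hc
  have e : psi q = ((q.den : ℤ) : ℚ) / ((2 * q.den - q.num : ℤ) : ℚ) := by
    unfold psi; push_cast; ring_nf
  rw [e]; exact this


lemma half_le_iff (q : ℚ) : 1/2 ≤ q ↔ (q.den : ℤ) ≤ 2 * q.num := by
  rw [Rat.le_iff]
  norm_num
  omega

lemma le_one_iff' (q : ℚ) : q ≤ 1 ↔ q.num ≤ (q.den : ℤ) := by
  rw [Rat.le_iff]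
  norm_num

/-- For `m > 1`, the map `h/k ↦ (2h-k)/h` is an order-preserving bijection from
`F^{≥1/2}(B(2m),m)` onto `F_m`, with order-preserving inverse `h/k ↦ k/(2k-h)`. -/
theorem stmt_3 (m : ℕ) (hm : 1 < m) :
    (∀ q ∈ FareyBRight m, phi q ∈ Farey m) ∧
    (∀ q ∈ Farey m, psi q ∈ FareyBRight m) ∧
    (∀ q ∈ FareyBRight m, psi (phi q) = q) ∧
    (∀ q ∈ Farey m, phi (psi q) = q) ∧
    (∀ q ∈ FareyBRight m, ∀ q' ∈ FareyBRight m, q < q' → phi q < phi q') ∧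
    (∀ q ∈ Farey m, ∀ q' ∈ Farey m, q < q' → psi q < psi q') := by
  -- basic facts extractors
  have factsR : ∀ q ∈ FareyBRight m, (q.den : ℤ) ≤ 2 * q.num ∧ q.num ≤ (q.den : ℤ)
      ∧ q.num ≤ (m : ℤ) ∧ 0 < (q.den : ℤ) := by
    intro q hq
    obtain ⟨⟨h0, h1, hd, hn, hdn⟩, hhalf⟩ := hq
    refine ⟨(half_le_iff q).mp hhalf, (le_one_iff' q).mp h1, hn, mod_cast q.pos⟩
  have factsF : ∀ q ∈ Farey m, 0 ≤ q.num ∧ q.num ≤ (q.den : ℤ) ∧ (q.den : ℤ) ≤ (m : ℤ)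
      ∧ 0 < (q.den : ℤ) := by
    intro q hq
    obtain ⟨h0, h1, hd⟩ := hq
    exact ⟨Rat.num_nonneg.mpr h0, (le_one_iff' q).mp h1, mod_cast hd, mod_cast q.pos⟩
  refine ⟨?_, ?_, ?_, ?_, ?_, ?_⟩
  · intro q hq
    obtain ⟨hhalf, hle, hnm, hdpos⟩ := factsR q hq
    obtain ⟨pn, pd⟩ := phi_num_den q hhalf
    refine ⟨?_, ?_, ?_⟩
    · rw [← Rat.num_nonneg, pn]; omega
    · rw [le_one_iff', pn, pd]; omega
    · have : ((phi q).den : ℤ) ≤ (m : ℤ) := by omega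
      exact_mod_cast this
  · intro q hq
    obtain ⟨h0, h1, hdm, hdpos⟩ := factsF q hq
    obtain ⟨pn, pd⟩ := psi_num_den q h1
    refine ⟨⟨?_, ?_, ?_, ?_, ?_⟩, ?_⟩
    · rw [← Rat.num_nonneg, pn]; omega
    · rw [le_one_iff', pn, pd]; omega
    · have : ((psi q).den : ℤ) ≤ ((2 * m : ℕ) : ℤ) := by push_cast; omega
      exact_mod_cast this
    · rw [pn]; omega
    · rw [pn, pd]; push_cast; omega
    · rw [half_le_iff, pn, pd]; omega
  · intro q hq
    obtain ⟨hhalf, hle, hnm, hdpos⟩ := factsR q hq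
    obtain ⟨pn, pd⟩ := phi_num_den q hhalf
    have pdq : ((phi q).den : ℚ) = (q.num : ℚ) := by exact_mod_cast pd
    have pnq : ((phi q).num : ℚ) = 2 * (q.num : ℚ) - (q.den : ℚ) := by
      rw [pn]; push_cast; ring
    have hnum0 : (0:ℤ) < q.num := by omega
    have hdq : ((q.den : ℚ)) ≠ 0 := by positivity
    rw [psi, pdq, pnq]
    rw [show 2 * (q.num : ℚ) - (2 * (q.num : ℚ) - (q.den : ℚ)) = (q.den : ℚ) by ring]
    exact Rat.num_div_den q
  · intro q hq
    obtain ⟨h0, h1, hdm, hdpos⟩ := factsF q hq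
    obtain ⟨pn, pd⟩ := psi_num_den q h1
    have pdq : ((psi q).den : ℚ) = 2 * (q.den : ℚ) - (q.num : ℚ) := by
      rw [← Int.cast_natCast, pd]; push_cast; ring
    have pnq : ((psi q).num : ℚ) = (q.den : ℚ) := by rw [pn]; push_cast; ring
    rw [phi, pdq, pnq]
    rw [show 2 * (q.den : ℚ) - (2 * (q.den : ℚ) - (q.num : ℚ)) = (q.num : ℚ) by ring]
    exact Rat.num_div_den q
  · intro q hq q' hq' hlt
    obtain ⟨hhalf, hle, hnm, hdpos⟩ := factsR q hq
    obtain ⟨hhalf', hle', hnm', hdpos'⟩ := factsR q' hq'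
    obtain ⟨pn, pd⟩ := phi_num_den q hhalf
    obtain ⟨pn', pd'⟩ := phi_num_den q' hhalf'
    rw [Rat.lt_iff] at hlt ⊢
    rw [pn, pd, pn', pd']
    nlinarith
  · intro q hq q' hq' hlt
    obtain ⟨h0, h1, hdm, hdpos⟩ := factsF q hq
    obtain ⟨h0', h1', hdm', hdpos'⟩ := factsF q' hq'
    obtain ⟨pn, pd⟩ := psi_num_den q h1
    obtain ⟨pn', pd'⟩ := psi_num_den q' h1'
    rw [Rat.lt_iff] at hlt ⊢
    rw [pn, pd, pn', pd']
    nlinarith
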